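/- Let G be a connected graph, let s and t be distinct vertices of G, and let G' be the graph obtained from G by adding a new vertex p adjacent only to s. Then every non-separating s-t path P in G' satisfies V(G') \ V(P) = {p}; equivalently, V(P) = V(G). -/

import Mathlib

/-- The graph obtained from `G` by adding one new vertex (`none`) adjacent
exactly to the vertices in `N`. -/
def SimpleGraph.addVertex {V : Type*} (G : SimpleGraph V) (N : Set V) :
    SimpleGraph (Option V) where
  Adj a b :=
    match a, b with
    | some u, some w => G.Adj u w
    | some u, none => u ∈ N
    | none, some w => w ∈ N
    | none, none => False
  symm := by
    constructor
    rintro (u | u) (w | w) h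
    · exact h
    · exact h
    · exact h
    · exact h.symm
  loopless := by
    constructor
    rintro (u | u) h
    · exact h
    · exact G.irrefl h

/-- if `G` is connected, `s ≠ t`, and `G'` is obtained from `G` by adding a
pendant vertex `p` adjacent only to `s`, then every non-separating `s`-`t` path `P` in `G'`
satisfies `V(G') \ V(P) = {p}`. -/
theorem stmt0 {V : Type*} (G : SimpleGraph V) (hG : G.Connected) (s t : V) (hst : s ≠ t)
    (P : (G.addVertex {s}).Walk (some s) (some t)) (hP : P.IsPath)
    (hNS : ((G.addVertex {s}).induce {x | x ∉ P.support}).Connected) :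
    {x | x ∉ P.support} = ({none} : Set (Option V)) := by
  classical
  have hadjnone : ∀ w : Option V, (G.addVertex {s}).Adj none w → w = some s := by
    rintro (w | w) h
    · exact absurd h (by simp [SimpleGraph.addVertex])
    · have : w ∈ ({s} : Set V) := h
      simp at this
      exact congrArg some this
  have hnone : (none : Option V) ∉ P.support := by
    intro hmem
    have hspec := P.take_spec hmem
    have hnodup := hP.support_nodup
    rw [← hspec, SimpleGraph.Walk.support_append, List.nodup_append] at hnodup
    have h1 : some s ∈ (P.takeUntil none hmem).support :=
      SimpleGraph.Walk.start_mem_support _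
    have h2 : some s ∈ (P.dropUntil none hmem).support.tail := by
      obtain ⟨x, h, q, hq⟩ := SimpleGraph.Walk.exists_eq_cons_of_ne
        (by simp : (none : Option V) ≠ some t) (P.dropUntil none hmem)
      rw [hq, SimpleGraph.Walk.support_cons]
      have hx := hadjnone x h
      subst hx
      exact SimpleGraph.Walk.start_mem_support q
    exact hnodup.2.2 _ h1 _ h2 rfl
  ext x
  simp only [Set.mem_setOf_eq, Set.mem_singleton_iff]
  constructor
  · intro hx
    by_contra hxne
    have hW := hNS.preconnected ⟨none, hnone⟩ ⟨x, hx⟩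
    obtain ⟨W⟩ := hW
    obtain ⟨b, h, q, hq⟩ := SimpleGraph.Walk.exists_eq_cons_of_ne
      (by simp [Subtype.ext_iff]; exact fun h => hxne h.symm) W
    have hadj : (G.addVertex {s}).Adj none b.1 := h
    have hb := hadjnone b.1 hadj
    have hbs : b.1 ∉ P.support := b.2
    rw [hb] at hbs
    exact hbs (SimpleGraph.Walk.start_mem_support P)
  · rintro rfl; exact hnone
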